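/- The system {L_{(2k,l,m)}φ₁ : k,l,m ∈ ℤ} is an orthonormal system in L²(ℝ³): ⟨L_{(2k,l,m)}φ₁, L_{(2k',l',m')}φ₁⟩ = δ_{k,k'} δ_{l,l'} δ_{m,m'}. -/

import Mathlib

open MeasureTheory

/-- Heisenberg group multiplication on ℝ³. -/
noncomputable def Hmul (a b : ℝ × ℝ × ℝ) : ℝ × ℝ × ℝ :=
  (a.1 + b.1, a.2.1 + b.2.1, a.2.2 + b.2.2 + (b.1 * a.2.1 - b.2.1 * a.1) / 2)

/-- Heisenberg group inverse. -/
noncomputable def Hinv (a : ℝ × ℝ × ℝ) : ℝ × ℝ × ℝ := (-a.1, -a.2.1, -a.2.2)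

/-- Group convolution on the Heisenberg group. -/
noncomputable def Hconv (f g : ℝ × ℝ × ℝ → ℝ) : ℝ × ℝ × ℝ → ℝ :=
  fun p => ∫ q : ℝ × ℝ × ℝ, f (Hmul p (Hinv q)) * g q

/-- The fundamental domain Q = [0,2]×[0,1]×[0,1]. -/
noncomputable def Q : Set (ℝ × ℝ × ℝ) :=
  Set.Icc (0 : ℝ) 2 ×ˢ Set.Icc (0 : ℝ) 1 ×ˢ Set.Icc (0 : ℝ) 1

/-- The B-splines on the Heisenberg group: φ₁ = (1/√2)·χ_Q, φₙ = φₙ₋₁ * φ₁. -/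
noncomputable def phi : ℕ → (ℝ × ℝ × ℝ → ℝ)
  | 0 => fun _ => 0
  | 1 => fun p => Q.indicator (fun _ => (Real.sqrt 2)⁻¹) p
  | (n + 2) => Hconv (phi (n + 1)) (phi 1)

/-- Left translation on the Heisenberg group. -/
noncomputable def Ltr (a : ℝ × ℝ × ℝ) (f : ℝ × ℝ × ℝ → ℝ) : ℝ × ℝ × ℝ → ℝ :=
  fun p => f (Hmul (Hinv a) p)

lemma hmul_inv_apply (u v s : ℝ) (p : ℝ × ℝ × ℝ) :
    Hmul (Hinv (u, v, s)) p
      = (p.1 - u, p.2.1 - v, p.2.2 - s + (u * p.2.1 - v * p.1) / 2) := by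
  simp only [Hmul, Hinv]
  refine Prod.ext (by ring) (Prod.ext (by ring) ?_)
  simp only
  ring

lemma measurableSet_Q : MeasurableSet Q :=
  measurableSet_Icc.prod (measurableSet_Icc.prod measurableSet_Icc)

lemma volume_Q : volume Q = 2 := by
  rw [Q, Measure.volume_eq_prod, Measure.prod_prod, Measure.volume_eq_prod,
    Measure.prod_prod, Real.volume_Icc, Real.volume_Icc]
  norm_num

lemma hmul_inv_measurePreserving (a : ℝ × ℝ × ℝ) :
    MeasurePreserving (fun p => Hmul (Hinv a) p)
      (volume : Measure (ℝ × ℝ × ℝ)) volume := by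
  obtain ⟨u, v, s⟩ := a
  have h1 : ∀ x : ℝ, MeasurePreserving
      (fun q : ℝ × ℝ => (q.1 - v, q.2 - s + (u * q.1 - v * x) / 2))
      (volume : Measure (ℝ × ℝ)) volume := by
    intro x
    rw [Measure.volume_eq_prod]
    refine (measurePreserving_sub_right volume v).skew_product
      (g := fun y t => t - s + (u * y - v * x) / 2) (by fun_prop) ?_
    refine Filter.Eventually.of_forall fun y => ?_
    show Measure.map (fun t : ℝ => t - s + (u * y - v * x) / 2) volume = volume
    have h : (fun t : ℝ => t - s + (u * y - v * x) / 2)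
        = fun t : ℝ => t + (-s + (u * y - v * x) / 2) := by
      funext t; ring
    rw [h]
    exact (measurePreserving_add_right volume _).map_eq
  have h2 : MeasurePreserving
      (fun p : ℝ × ℝ × ℝ => (p.1 - u, (p.2.1 - v, p.2.2 - s + (u * p.2.1 - v * p.1) / 2)))
      (volume : Measure (ℝ × ℝ × ℝ)) volume := by
    rw [Measure.volume_eq_prod]
    exact (measurePreserving_sub_right volume u).skew_product
      (g := fun (x : ℝ) (q : ℝ × ℝ) => (q.1 - v, q.2 - s + (u * q.1 - v * x) / 2))
      (by fun_prop) (Filter.Eventually.of_forall fun x => (h1 x).map_eq)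
  have h : (fun p : ℝ × ℝ × ℝ => Hmul (Hinv (u, v, s)) p)
      = fun p : ℝ × ℝ × ℝ => (p.1 - u, (p.2.1 - v, p.2.2 - s + (u * p.2.1 - v * p.1) / 2)) := by
    funext p; exact hmul_inv_apply u v s p
  rw [h]
  exact h2

theorem translates_phi_one_orthonormal (k l m k' l' m' : ℤ) :
    ∫ p : ℝ × ℝ × ℝ,
        Ltr ((2 * k : ℝ), (l : ℝ), (m : ℝ)) (phi 1) p *
          Ltr ((2 * k' : ℝ), (l' : ℝ), (m' : ℝ)) (phi 1) p =
      if k = k' ∧ l = l' ∧ m = m' then 1 else 0 := by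
  set a : ℝ × ℝ × ℝ := ((2 * k : ℝ), (l : ℝ), (m : ℝ)) with ha
  set a' : ℝ × ℝ × ℝ := ((2 * k' : ℝ), (l' : ℝ), (m' : ℝ)) with ha'
  set A : Set (ℝ × ℝ × ℝ) := (fun p => Hmul (Hinv a) p) ⁻¹' Q with hA
  set A' : Set (ℝ × ℝ × ℝ) := (fun p => Hmul (Hinv a') p) ⁻¹' Q with hA'
  have hmA : MeasurableSet A :=
    (hmul_inv_measurePreserving a).measurable measurableSet_Q
  have hmA' : MeasurableSet A' :=
    (hmul_inv_measurePreserving a').measurable measurableSet_Q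
  have key : (fun p => Ltr a (phi 1) p * Ltr a' (phi 1) p)
      = (A ∩ A').indicator (fun _ => (2 : ℝ)⁻¹) := by
    funext p
    simp only [Ltr, phi, Set.indicator_apply, Set.mem_inter_iff, Set.mem_preimage, hA, hA']
    by_cases h1 : Hmul (Hinv a) p ∈ Q <;> by_cases h2 : Hmul (Hinv a') p ∈ Q <;>
      simp [h1, h2, ← mul_inv, Real.mul_self_sqrt (by norm_num : (0:ℝ) ≤ 2)]
  rw [key, integral_indicator_const _ (hmA.inter hmA')]
  by_cases h : k = k' ∧ l = l' ∧ m = m'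
  · obtain ⟨rfl, rfl, rfl⟩ := h
    have hAA : A' = A := by rw [hA, hA', ha, ha']
    rw [hAA, Set.inter_self, measureReal_def, (hmul_inv_measurePreserving a).measure_preimage
      measurableSet_Q.nullMeasurableSet, volume_Q, if_pos ⟨rfl, rfl, rfl⟩]
    simp
  · have hnull : volume (A ∩ A') = 0 := by
      by_cases hk : k = k'
      · by_cases hl : l = l'
        · -- m ≠ m'
          have hm : m ≠ m' := fun hm => h ⟨hk, hl, hm⟩
          subst hk; subst hl
          set c : ℝ := (m' : ℝ) - (m : ℝ) with hc
          have hsub : A ∩ A' ⊆ (fun p => Hmul (Hinv a) p) ⁻¹'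
              (Set.univ ×ˢ Set.univ ×ˢ Set.Icc (max 0 c) (min 1 (c + 1))) := by
            rintro ⟨x, y, t⟩ ⟨hp1, hp2⟩
            simp only [hA, Set.mem_preimage, Q, hmul_inv_apply, Set.mem_prod,
              Set.mem_Icc, ha] at hp1
            simp only [hA', Set.mem_preimage, Q, hmul_inv_apply, Set.mem_prod,
              Set.mem_Icc, ha'] at hp2
            simp only [Set.mem_preimage, hmul_inv_apply, Set.mem_prod, Set.mem_univ,
              Set.mem_Icc, true_and, sup_le_iff, le_inf_iff, max_le_iff, le_min_iff, ha]
            obtain ⟨-, -, hz1, hz2⟩ := hp1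
            obtain ⟨-, -, hz1', hz2'⟩ := hp2
            refine ⟨⟨hz1, ?_⟩, hz2, ?_⟩ <;> simp only [hc] <;> linarith
          refine measure_mono_null hsub ?_
          rw [(hmul_inv_measurePreserving a).measure_preimage
            ((MeasurableSet.univ.prod (MeasurableSet.univ.prod
              measurableSet_Icc)).nullMeasurableSet)]
          rw [Measure.volume_eq_prod, Measure.prod_prod, Measure.volume_eq_prod,
            Measure.prod_prod, Real.volume_Icc]
          have habs : (1 : ℝ) ≤ |c| := by
            have h1 : (1 : ℤ) ≤ |m' - m| := Int.one_le_abs (sub_ne_zero.mpr (Ne.symm hm))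
            have h2 : (1 : ℝ) ≤ ((|m' - m| : ℤ) : ℝ) := by exact_mod_cast h1
            rw [Int.cast_abs] at h2
            push_cast at h2
            rw [hc]
            exact h2
          have hlen : min 1 (c + 1) - max 0 c ≤ 0 := by
            rcases le_or_gt 1 c with hc1 | hc1
            · have h3 : max 0 c = c := max_eq_right (by linarith)
              have h4 : min 1 (c + 1) ≤ 1 := min_le_left _ _
              rw [h3]; linarith
            · have h5 : c ≤ -1 := by
                rcases abs_cases c with ⟨e1, _⟩ | ⟨e1, _⟩ <;> linarith
              have h3 : min 1 (c + 1) = c + 1 := min_eq_right (by linarith)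
              have h4 : max 0 c = 0 := max_eq_left (by linarith)
              rw [h3, h4]; linarith
          rw [ENNReal.ofReal_eq_zero.mpr hlen]
          simp
        · -- l ≠ l'
          have hsub : A ∩ A' ⊆ Set.univ ×ˢ
              ((Set.Icc (max (l : ℝ) (l' : ℝ)) (min (l : ℝ) (l' : ℝ) + 1)) ×ˢ Set.univ) := by
            rintro ⟨x, y, t⟩ ⟨hp1, hp2⟩
            simp only [hA, Set.mem_preimage, Q, hmul_inv_apply, Set.mem_prod,
              Set.mem_Icc, ha] at hp1
            simp only [hA', Set.mem_preimage, Q, hmul_inv_apply, Set.mem_prod,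
              Set.mem_Icc, ha'] at hp2
            simp only [Set.mem_prod, Set.mem_univ, Set.mem_Icc, true_and, and_true,
              max_le_iff, le_min_iff, sup_le_iff, le_inf_iff]
            obtain ⟨-, ⟨hy1, hy2⟩, -⟩ := hp1
            obtain ⟨-, ⟨hy1', hy2'⟩, -⟩ := hp2
            refine ⟨⟨by linarith, by linarith⟩, ?_⟩
            have hmin := le_min (show y - 1 ≤ (l : ℝ) by linarith)
              (show y - 1 ≤ (l' : ℝ) by linarith)
            linarith
          refine measure_mono_null hsub ?_
          rw [Measure.volume_eq_prod, Measure.prod_prod, Measure.volume_eq_prod,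
            Measure.prod_prod, Real.volume_Icc]
          have habs : (1 : ℝ) ≤ |(l : ℝ) - (l' : ℝ)| := by
            have h1 : (1 : ℤ) ≤ |l - l'| := Int.one_le_abs (sub_ne_zero.mpr hl)
            have h2 : (1 : ℝ) ≤ ((|l - l'| : ℤ) : ℝ) := by exact_mod_cast h1
            rw [Int.cast_abs] at h2
            push_cast at h2
            exact h2
          have hlen : min (l : ℝ) (l' : ℝ) + 1 - max (l : ℝ) (l' : ℝ) ≤ 0 := by
            have h5 := max_sub_min_eq_abs (l : ℝ) (l' : ℝ)
            have h6 := abs_sub_comm (l : ℝ) (l' : ℝ)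
            rw [abs_sub_comm] at h5; linarith
          rw [ENNReal.ofReal_eq_zero.mpr hlen]
          simp
      · -- k ≠ k'
        have hsub : A ∩ A' ⊆
            (Set.Icc (max (2 * k : ℝ) (2 * k' : ℝ)) (min (2 * k : ℝ) (2 * k' : ℝ) + 2))
              ×ˢ Set.univ := by
          rintro ⟨x, y, t⟩ ⟨hp1, hp2⟩
          simp only [hA, Set.mem_preimage, Q, hmul_inv_apply, Set.mem_prod,
            Set.mem_Icc, ha] at hp1
          simp only [hA', Set.mem_preimage, Q, hmul_inv_apply, Set.mem_prod,
            Set.mem_Icc, ha'] at hp2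
          simp only [Set.mem_prod, Set.mem_univ, Set.mem_Icc, and_true,
            max_le_iff, le_min_iff, sup_le_iff, le_inf_iff]
          obtain ⟨⟨hx1, hx2⟩, -⟩ := hp1
          obtain ⟨⟨hx1', hx2'⟩, -⟩ := hp2
          refine ⟨⟨by linarith, by linarith⟩, ?_⟩
          have hmin := le_min (show x - 2 ≤ (2 * k : ℝ) by linarith)
            (show x - 2 ≤ (2 * k' : ℝ) by linarith)
          linarith
        refine measure_mono_null hsub ?_
        rw [Measure.volume_eq_prod, Measure.prod_prod, Real.volume_Icc]
        have habs : (2 : ℝ) ≤ |(2 * k : ℝ) - (2 * k' : ℝ)| := by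
          have h1 : (1 : ℤ) ≤ |k - k'| := Int.one_le_abs (sub_ne_zero.mpr hk)
          have h2 : (1 : ℝ) ≤ ((|k - k'| : ℤ) : ℝ) := by exact_mod_cast h1
          rw [Int.cast_abs] at h2
          push_cast at h2
          have h3 : |(2 * k : ℝ) - (2 * k' : ℝ)| = 2 * |(k : ℝ) - (k' : ℝ)| := by
            rw [show (2 * k : ℝ) - (2 * k' : ℝ) = 2 * ((k : ℝ) - (k' : ℝ)) by ring,
              abs_mul, abs_two]
          rw [h3]
          have h4 : (1 : ℝ) ≤ |(k : ℝ) - (k' : ℝ)| := by simpa using h2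
          linarith
        have hlen : min (2 * k : ℝ) (2 * k' : ℝ) + 2 - max (2 * k : ℝ) (2 * k' : ℝ) ≤ 0 := by
          have h5 := max_sub_min_eq_abs (2 * k : ℝ) (2 * k' : ℝ)
          have h6 := abs_sub_comm (2 * k : ℝ) (2 * k' : ℝ)
          rw [abs_sub_comm] at h5; linarith
        rw [ENNReal.ofReal_eq_zero.mpr hlen]
        simp
    rw [measureReal_def, hnull, if_neg h]
    simp
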